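/- Let f : ℝ≥0 → ℝ be continuous with f(0) ∈ [0,h], let Λ_{0,h}(f) denote its two-sided Skorohod reflection on [0,h], and let T ≥ 0. Then for all t < T, Λ_{0,h}(f)(t) = Λ_{0,h}(f(· ∧ T))(t), and for all t ≥ T, Λ_{0,h}(f)(t) = Λ_{0,h}(R^T(f) + Λ_{0,h}(f)(T))(t), where R^T(f)(t) := 1_{t ≥ T}·(f(t) − f(T)). -/

import Mathlib

open Set
open scoped NNReal ENNReal

/-- Solution data for the two-sided Skorohod reflection problem of `f` on `[0,h]`:
`c0` and `ch` are the compensators at `0` and at `h`,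
and `fun t => f t + ch t + c0 t` is the reflected path `Λ_{0,h}(f)`.
The support conditions on the measures `dc⁰` and `d(−cʰ)` are phrased as:
the compensator is constant on every (closed) interval on which the reflected
path avoids the corresponding boundary. -/
structure SkorohodPair (h : ℝ) (f c0 ch : ℝ≥0 → ℝ) : Prop where
  cont0 : Continuous c0
  conth : Continuous ch
  init0 : c0 0 = 0
  inith : ch 0 = 0
  mem_Icc : ∀ t, f t + ch t + c0 t ∈ Set.Icc (0 : ℝ) h
  mono0 : Monotone c0
  antih : Antitone ch
  flat0 : ∀ a b : ℝ≥0, a ≤ b → (∀ t ∈ Set.Icc a b, f t + ch t + c0 t ≠ 0) → c0 b = c0 a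
  flath : ∀ a b : ℝ≥0, a ≤ b → (∀ t ∈ Set.Icc a b, f t + ch t + c0 t ≠ h) → ch b = ch a

/-- One-sided comparison for uniqueness of the two-sided Skorohod reflection. -/
lemma skorohod_le (h : ℝ) (f c0 ch c0' ch' : ℝ≥0 → ℝ)
    (hp : SkorohodPair h f c0 ch) (hq : SkorohodPair h f c0' ch') (t : ℝ≥0) :
    f t + ch t + c0 t ≤ f t + ch' t + c0' t := by
  set D : ℝ≥0 → ℝ := fun u => (ch u + c0 u) - (ch' u + c0' u) with hD
  have hDc : Continuous D := (hp.conth.add hp.cont0).sub (hq.conth.add hq.cont0)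
  have hD0 : D 0 = 0 := by simp [hD, hp.init0, hp.inith, hq.init0, hq.inith]
  by_contra hcon
  push_neg at hcon
  have hDt : 0 < D t := by simp only [hD]; linarith
  set S : Set ℝ≥0 := {u | u ≤ t ∧ D u ≤ 0} with hS
  have hSclosed : IsClosed S := by
    have : S = Iic t ∩ D ⁻¹' (Iic 0) := by ext u; simp [hS]
    rw [this]
    exact isClosed_Iic.inter (isClosed_Iic.preimage hDc)
  have hne : S.Nonempty := ⟨0, (zero_le : (0:ℝ≥0) ≤ t), hD0.le⟩
  have hbdd : BddAbove S := ⟨t, fun u hu => hu.1⟩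
  set s : ℝ≥0 := sSup S with hs
  have hsmem : s ∈ S := hSclosed.csSup_mem hne hbdd
  have hst : s < t := lt_of_le_of_ne hsmem.1 (fun he => by
    have := hsmem.2; rw [he] at this; linarith)
  have hpos : ∀ u, s < u → u ≤ t → 0 < D u := by
    intro u hsu hut
    by_contra hle
    push_neg at hle
    exact absurd (le_csSup hbdd ⟨hut, hle⟩) (not_le.2 hsu)
  have key : ∀ s', s < s' → s' ≤ t → D t ≤ D s' := by
    intro s' hs' hs't
    have h1 : c0 t = c0 s' := by
      refine hp.flat0 s' t hs't (fun u hu => ?_)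
      have h2 := hpos u (lt_of_lt_of_le hs' hu.1) hu.2
      have h3 := (hq.mem_Icc u).1
      simp only [hD] at h2
      have : 0 < f u + ch u + c0 u := by linarith
      exact this.ne'
    have h2 : ch' t = ch' s' := by
      refine hq.flath s' t hs't (fun u hu => ?_)
      have h2 := hpos u (lt_of_lt_of_le hs' hu.1) hu.2
      have h3 := (hp.mem_Icc u).2
      simp only [hD] at h2
      have : f u + ch' u + c0' u < h := by linarith
      exact this.ne
    have h3 : ch t ≤ ch s' := hp.antih hs't
    have h4 : c0' s' ≤ c0' t := hq.mono0 hs't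
    simp only [hD]
    linarith
  have hDs : D s < D t := lt_of_le_of_lt hsmem.2 hDt
  have hev1 : ∀ᶠ u in nhds s, D u < D t := (hDc.tendsto s).eventually (eventually_lt_nhds hDs)
  have hev : ∀ᶠ u in nhdsWithin s (Ioi s), s < u ∧ u ≤ t ∧ D u < D t := by
    filter_upwards [Ioc_mem_nhdsGT_of_mem ⟨le_refl s, hst⟩,
      hev1.filter_mono nhdsWithin_le_nhds, self_mem_nhdsWithin] with u h1 h2 h3
    exact ⟨h3, h1.2, h2⟩
  obtain ⟨u, hu1, hu2, hu3⟩ := hev.exists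
  exact absurd (key u hu1 hu2) (not_le.2 hu3)

/-- Uniqueness of the two-sided Skorohod reflected path. -/
lemma skorohod_unique (h : ℝ) (f c0 ch c0' ch' : ℝ≥0 → ℝ)
    (hp : SkorohodPair h f c0 ch) (hq : SkorohodPair h f c0' ch') (t : ℝ≥0) :
    f t + ch t + c0 t = f t + ch' t + c0' t :=
  le_antisymm (skorohod_le h f c0 ch c0' ch' hp hq t) (skorohod_le h f c0' ch' c0 ch hq hp t)

/-- **Two-stage reflection** (Lemma: the two-sided Skorohod reflection can be computed by
reflecting up to time `T`, then reflecting the remaining increments started from the level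
`Λ_{0,h}(f)(T)`).  Here `(c0, ch)`, `(d0, dh)`, `(e0, eh)` are the compensators of
`f`, of `f(· ∧ T)`, and of `R^T(f) + Λ_{0,h}(f)(T)` respectively, where
`R^T(f)(t) = 1_{t ≥ T}·(f t − f T)`. -/
theorem skorohod_two_stage
    (h : ℝ) (hh : 0 < h) (f : ℝ≥0 → ℝ) (hf : Continuous f)
    (hf0 : f 0 ∈ Set.Icc (0 : ℝ) h) (T : ℝ≥0)
    (c0 ch d0 dh e0 eh : ℝ≥0 → ℝ)
    (hp : SkorohodPair h f c0 ch)
    (hq : SkorohodPair h (fun t => f (min t T)) d0 dh)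
    (hr : SkorohodPair h
      (fun t => (if T ≤ t then f t - f T else 0) + (f T + ch T + c0 T)) e0 eh) :
    (∀ t, t < T → f t + ch t + c0 t = f (min t T) + dh t + d0 t) ∧
    (∀ t, T ≤ t → f t + ch t + c0 t =
      ((if T ≤ t then f t - f T else 0) + (f T + ch T + c0 T)) + eh t + e0 t) := by
  -- Part 1: the truncated compensators solve the truncated problem
  have hminlem : ∀ a b u : ℝ≥0, u ∈ Icc (min a T) (min b T) → min (max a u) T = u := by
    intro a b u hu
    have huT : u ≤ T := hu.2.trans (min_le_right b T)
    rcases le_total a u with hau | hua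
    · rw [max_eq_right hau, min_eq_left huT]
    · rw [max_eq_left hua]
      exact le_antisymm hu.1 (le_min hua huT)
  have hq' : SkorohodPair h (fun t => f (min t T))
      (fun t => c0 (min t T)) (fun t => ch (min t T)) := by
    constructor
    · exact hp.cont0.comp (continuous_id.min continuous_const)
    · exact hp.conth.comp (continuous_id.min continuous_const)
    · simp [min_eq_left (zero_le : (0:ℝ≥0) ≤ T), hp.init0]
    · simp [min_eq_left (zero_le : (0:ℝ≥0) ≤ T), hp.inith]
    · intro t; exact hp.mem_Icc _
    · exact fun a b hab => hp.mono0 (min_le_min hab le_rfl)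
    · exact fun a b hab => hp.antih (min_le_min hab le_rfl)
    · intro a b hab hne
      refine hp.flat0 _ _ (min_le_min hab le_rfl) (fun u hu => ?_)
      have hmem : max a u ∈ Icc a b :=
        ⟨le_max_left _ _, max_le hab (hu.2.trans (min_le_left b T))⟩
      have := hne (max a u) hmem
      rwa [hminlem a b u hu] at this
    · intro a b hab hne
      refine hp.flath _ _ (min_le_min hab le_rfl) (fun u hu => ?_)
      have hmem : max a u ∈ Icc a b :=
        ⟨le_max_left _ _, max_le hab (hu.2.trans (min_le_left b T))⟩
      have := hne (max a u) hmem
      rwa [hminlem a b u hu] at this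
  -- Part 2: restarted problem
  set g : ℝ≥0 → ℝ := fun t => (if T ≤ t then f t - f T else 0) + (f T + ch T + c0 T) with hg
  set e0' : ℝ≥0 → ℝ := fun t => c0 (max t T) - c0 T with he0'
  set eh' : ℝ≥0 → ℝ := fun t => ch (max t T) - ch T with heh'
  have hgL : ∀ t, g t + eh' t + e0' t = f (max t T) + ch (max t T) + c0 (max t T) := by
    intro t
    by_cases hTt : T ≤ t
    · simp only [hg, he0', heh', if_pos hTt, max_eq_left hTt]; ring
    · have ht : t ≤ T := le_of_not_ge hTt
      simp only [hg, he0', heh', if_neg hTt, max_eq_right ht]; ring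
  have hmaxlem : ∀ a b u : ℝ≥0, a ≤ b → u ∈ Icc (max a T) (max b T) →
      max (min u b) T = u := by
    intro a b u hab hu
    have hTu : T ≤ u := (le_max_right a T).trans hu.1
    rcases le_total u b with hub | hbu
    · rw [min_eq_left hub, max_eq_left hTu]
    · rw [min_eq_right hbu]
      exact le_antisymm (max_le hbu hTu) hu.2
  have hr' : SkorohodPair h g e0' eh' := by
    constructor
    · exact (hp.cont0.comp (continuous_id.max continuous_const)).sub continuous_const
    · exact (hp.conth.comp (continuous_id.max continuous_const)).sub continuous_const
    · simp [he0', max_eq_right (zero_le : (0:ℝ≥0) ≤ T)]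
    · simp [heh', max_eq_right (zero_le : (0:ℝ≥0) ≤ T)]
    · intro t; rw [hgL t]; exact hp.mem_Icc _
    · exact fun a b hab => sub_le_sub_right (hp.mono0 (max_le_max hab le_rfl)) _
    · exact fun a b hab => sub_le_sub_right (hp.antih (max_le_max hab le_rfl)) _
    · intro a b hab hne
      have : c0 (max b T) = c0 (max a T) := by
        refine hp.flat0 _ _ (max_le_max hab le_rfl) (fun u hu => ?_)
        have hmem : min u b ∈ Icc a b :=
          ⟨le_min ((le_max_left a T).trans hu.1) hab, min_le_right u b⟩
        have h1 := hne (min u b) hmem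
        rw [hgL, hmaxlem a b u hab hu] at h1
        exact h1
      simp only [he0', this]
    · intro a b hab hne
      have : ch (max b T) = ch (max a T) := by
        refine hp.flath _ _ (max_le_max hab le_rfl) (fun u hu => ?_)
        have hmem : min u b ∈ Icc a b :=
          ⟨le_min ((le_max_left a T).trans hu.1) hab, min_le_right u b⟩
        have h1 := hne (min u b) hmem
        rw [hgL, hmaxlem a b u hab hu] at h1
        exact h1
      simp only [heh', this]
  constructor
  · intro t ht
    have := skorohod_unique h (fun t => f (min t T)) d0 dh
      (fun t => c0 (min t T)) (fun t => ch (min t T)) hq hq' t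
    rw [this, min_eq_left ht.le]
  · intro t ht
    have := skorohod_unique h g e0 eh e0' eh' hr hr' t
    rw [show ((if T ≤ t then f t - f T else 0) + (f T + ch T + c0 T)) + eh t + e0 t
        = g t + eh t + e0 t from rfl, this, hgL t, max_eq_left ht]
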